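/- Central pinning for symmetric profiles: let f be a profile symmetric about 0, i.e. f(α) + f(1 − α) = 0 for Lebesgue-almost every α ∈ [0,1]. Then for every agent α ∈ N₀(f) ∩ N₁(f), one has N_α(f) = [0,1] and Uf(α) = 0. -/

import Mathlib

open MeasureTheory Set

/-- The neighbourhood `N_α(f)` of an agent `α ∈ [0,1]`:
all agents `β ∈ [0,1]` whose opinion is within distance 1 of that of `α`. -/
def nbhdHK (f : ℝ → ℝ) (α : ℝ) : Set ℝ :=
  {β | β ∈ Icc (0:ℝ) 1 ∧ |f β - f α| ≤ 1}

/-- The Hegselmann–Krause updating operator `U`: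
`Uf(α)` is the average of `f` over `N_α(f)` if that set has positive Lebesgue
measure, and `f(α)` otherwise. -/
noncomputable def updateHK (f : ℝ → ℝ) (α : ℝ) : ℝ :=
  if 0 < (volume (nbhdHK f α)).toReal then
    (∫ β in nbhdHK f α, f β) / (volume (nbhdHK f α)).toReal
  else f α

lemma integral_zero_of_sym (f : ℝ → ℝ) (hf : MonotoneOn f (Icc 0 1))
    (hsym : ∀ᵐ α ∂(volume.restrict (Icc (0:ℝ) 1)), f α + f (1 - α) = 0) :
    (∫ β in Icc (0:ℝ) 1, f β) = 0 := by
  have hint : IntegrableOn f (Icc (0:ℝ) 1) := hf.integrableOn_isCompact isCompact_Icc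
  have hint2 : IntegrableOn (fun β => f (1 - β)) (Icc (0:ℝ) 1) := by
    have : AntitoneOn (fun β => f (1 - β)) (Icc (0:ℝ) 1) := by
      intro a ha b hb hab
      exact hf (by constructor <;> [linarith [hb.2]; linarith [hb.1]])
        (by constructor <;> [linarith [ha.2]; linarith [ha.1]]) (by linarith)
    exact AntitoneOn.integrableOn_isCompact isCompact_Icc this
  have hchg : (∫ β in Icc (0:ℝ) 1, f (1 - β)) = ∫ β in Icc (0:ℝ) 1, f β := by
    rw [MeasureTheory.integral_Icc_eq_integral_Ioc,
        MeasureTheory.integral_Icc_eq_integral_Ioc,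
        ← intervalIntegral.integral_of_le (by norm_num : (0:ℝ) ≤ 1),
        ← intervalIntegral.integral_of_le (by norm_num : (0:ℝ) ≤ 1)]
    have := intervalIntegral.integral_comp_sub_left (a := (0:ℝ)) (b := 1) f 1
    simpa using this
  have hsum : (∫ β in Icc (0:ℝ) 1, (f β + f (1 - β))) = 0 := by
    rw [MeasureTheory.integral_congr_ae (g := fun _ => (0:ℝ)) (hsym.mono fun x hx => hx)]
    simp
  rw [MeasureTheory.integral_add hint hint2, hchg] at hsum
  linarith

/-- central pinning for symmetric profiles: if a profile `f` is
symmetric about `0`, then every agent `α ∈ N₀(f) ∩ N₁(f)` sees everyone,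
`N_α(f) = [0,1]`, and `Uf(α) = 0`. -/
theorem stmt17 (f : ℝ → ℝ) (hf : MonotoneOn f (Icc 0 1))
    (hsym : ∀ᵐ α ∂(volume.restrict (Icc (0:ℝ) 1)), f α + f (1 - α) = 0) :
    ∀ α ∈ nbhdHK f 0 ∩ nbhdHK f 1,
      nbhdHK f α = Icc (0:ℝ) 1 ∧ updateHK f α = 0 := by
  intro α hα
  obtain ⟨⟨hα01, h0⟩, ⟨_, h1⟩⟩ := hα
  rw [abs_le] at h0 h1
  have hN : nbhdHK f α = Icc (0:ℝ) 1 := by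
    ext β
    constructor
    · exact fun h => h.1
    · intro hβ
      refine ⟨hβ, abs_le.2 ⟨?_, ?_⟩⟩
      · have : f 0 ≤ f β := hf (by simp) hβ hβ.1
        linarith [h0.2]
      · have : f β ≤ f 1 := hf hβ (by simp) hβ.2
        linarith [h1.1]
  refine ⟨hN, ?_⟩
  rw [updateHK, hN]
  have hvol : (volume (Icc (0:ℝ) 1)).toReal = 1 := by
    simp [Real.volume_Icc]
  rw [hvol, if_pos one_pos, integral_zero_of_sym f hf hsym]
  simp
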